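/- Let A be a d×d symmetric positive definite real matrix, w ∈ ℝ^d and s > 0 with A − w w'/s positive definite and s − w' A^{-1} w > 0. For μ > 0 let V(μ) be the inverse of the block matrix [[μA, w],[w', s/μ]]. Then for every j ∈ {1,...,d} the diagonal entry (V(μ))_{jj} is a nonincreasing function of μ on (0,∞), and the entry (V(μ))_{d+1,d+1} is a nondecreasing function of μ on (0,∞). That is, a larger μ leads to more precise estimation of β and less precise estimation of μ. -/

import Mathlib

open Matrix

/-- The diagonal entries of `V(μ) = [[μA, w],[w', s/μ]]⁻¹` corresponding to `β` are
nonincreasing in `μ` on `(0,∞)`, while the entry corresponding to `μ` is nondecreasing: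
a larger `μ` gives more precise estimation of `β` and less precise estimation of `μ`. -/
theorem fisher_info_inverse_monotone {d : ℕ} (A : Matrix (Fin d) (Fin d) ℝ)
    (w : Fin d → ℝ) (s : ℝ) (hA : A.PosDef) (hs : 0 < s)
    (h1 : (A - s⁻¹ • vecMulVec w w).PosDef)
    (h2 : 0 < s - w ⬝ᵥ A⁻¹ *ᵥ w) :
    (∀ j : Fin d, AntitoneOn (fun μ : ℝ =>
        (fromBlocks (μ • A) (Matrix.of fun i (_ : Unit) => w i)
            (Matrix.of fun (_ : Unit) j' => w j') (Matrix.of fun _ _ => s / μ))⁻¹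
          (Sum.inl j) (Sum.inl j)) (Set.Ioi 0)) ∧
    MonotoneOn (fun μ : ℝ =>
        (fromBlocks (μ • A) (Matrix.of fun i (_ : Unit) => w i)
            (Matrix.of fun (_ : Unit) j' => w j') (Matrix.of fun _ _ => s / μ))⁻¹
          (Sum.inr ()) (Sum.inr ())) (Set.Ioi 0) := by
  classical
  set B : Matrix (Fin d) Unit ℝ := Matrix.of fun i (_ : Unit) => w i with hB
  set D : Matrix Unit Unit ℝ := Matrix.of fun (_ : Unit) (_ : Unit) => s with hD
  haveI : Invertible A := hA.isUnit.invertible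
  have hBH : Bᴴ = Matrix.of fun (_ : Unit) j' => w j' := by
    ext i j; simp [hB]
  set N : Matrix (Fin d ⊕ Unit) (Fin d ⊕ Unit) ℝ := fromBlocks A B Bᴴ D with hN
  have hSchur : D - Bᴴ * A⁻¹ * B
      = Matrix.diagonal (fun _ : Unit => s - w ⬝ᵥ A⁻¹ *ᵥ w) := by
    ext i j
    simp only [Matrix.sub_apply, Matrix.mul_apply, Matrix.diagonal, hB, hD,
      Matrix.of_apply, Matrix.conjTranspose_apply, star_trivial, dotProduct,
      Matrix.mulVec, Sum.elim_inl, Sum.elim_inr]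
    rcases i; rcases j
    simp [Finset.mul_sum, Finset.sum_mul, dotProduct, Matrix.mulVec]
    rw [Finset.sum_comm]
    congr 1; ext i; congr 1; ext j; ring
  have hNsd : N.PosSemidef := by
    rw [hN, PosDef.fromBlocks₁₁ B D hA, hSchur]
    exact PosSemidef.diagonal (fun _ => h2.le)
  have hdet : IsUnit N.det := by
    rw [hN, det_fromBlocks₁₁, invOf_eq_nonsing_inv, hSchur]
    simp only [det_diagonal, Finset.prod_const]
    have : (0:ℝ) < A.det * (s - w ⬝ᵥ A⁻¹ *ᵥ w) ^ Fintype.card Unit :=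
      mul_pos hA.det_pos (pow_pos h2 _)
    exact (this.ne').isUnit
  have hNinv : N⁻¹.PosSemidef := hNsd.inv
  have hdiag : ∀ i, 0 ≤ N⁻¹ i i := fun i => by
    exact hNinv.diag_nonneg
  -- factorization of the block matrix
  have hfact : ∀ μ : ℝ, 0 < μ →
      fromBlocks (μ • A) B Bᴴ (Matrix.of fun (_:Unit) (_:Unit) => s / μ)
        = diagonal (Sum.elim (fun _ : Fin d => μ) (fun _ : Unit => (1:ℝ)))
          * N * diagonal (Sum.elim (fun _ : Fin d => (1:ℝ)) (fun _ : Unit => μ⁻¹)) := by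
    intro μ hμ
    ext i j
    rw [Matrix.mul_diagonal, Matrix.diagonal_mul]
    rcases i with i | i <;> rcases j with j | j <;>
      simp [hB, hD, hN, fromBlocks] <;> field_simp
  -- formula for the inverse
  have hinv : ∀ μ : ℝ, 0 < μ →
      (fromBlocks (μ • A) B Bᴴ (Matrix.of fun (_:Unit) (_:Unit) => s / μ))⁻¹
        = diagonal (Sum.elim (fun _ : Fin d => (1:ℝ)) (fun _ : Unit => μ))
          * N⁻¹ * diagonal (Sum.elim (fun _ : Fin d => μ⁻¹) (fun _ : Unit => (1:ℝ))) := by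
    intro μ hμ
    apply Matrix.inv_eq_right_inv
    rw [hfact μ hμ]
    simp only [Matrix.mul_assoc]
    rw [← Matrix.mul_assoc (diagonal (Sum.elim (fun _ : Fin d => (1:ℝ)) (fun _ : Unit => μ⁻¹))),
      diagonal_mul_diagonal]
    have hv : (diagonal fun i => (Sum.elim (fun _ : Fin d => (1:ℝ)) (fun _ : Unit => μ⁻¹)) i
        * (Sum.elim (fun _ : Fin d => (1:ℝ)) (fun _ : Unit => μ)) i)
        = (1 : Matrix (Fin d ⊕ Unit) (Fin d ⊕ Unit) ℝ) := by
      ext i j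
      rcases i with i | i <;> rcases j with j | j <;>
        simp [Matrix.diagonal_apply, Matrix.one_apply, inv_mul_cancel₀ hμ.ne']
    rw [hv, Matrix.one_mul, ← Matrix.mul_assoc N, Matrix.mul_nonsing_inv _ hdet,
      Matrix.one_mul, diagonal_mul_diagonal]
    have hu : (diagonal fun i => (Sum.elim (fun _ : Fin d => μ) (fun _ : Unit => (1:ℝ))) i
        * (Sum.elim (fun _ : Fin d => μ⁻¹) (fun _ : Unit => (1:ℝ))) i)
        = (1 : Matrix (Fin d ⊕ Unit) (Fin d ⊕ Unit) ℝ) := by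
      ext i j
      rcases i with i | i <;> rcases j with j | j <;>
        simp [Matrix.diagonal_apply, Matrix.one_apply, mul_inv_cancel₀ hμ.ne']
    rw [hu]
  -- entry formulas
  have key1 : ∀ (j : Fin d) (μ : ℝ), 0 < μ →
      (fromBlocks (μ • A) B Bᴴ (Matrix.of fun (_:Unit) (_:Unit) => s / μ))⁻¹
        (Sum.inl j) (Sum.inl j) = N⁻¹ (Sum.inl j) (Sum.inl j) * μ⁻¹ := by
    intro j μ hμ
    rw [hinv μ hμ, Matrix.mul_diagonal, Matrix.diagonal_mul]
    simp
  have key2 : ∀ (μ : ℝ), 0 < μ →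
      (fromBlocks (μ • A) B Bᴴ (Matrix.of fun (_:Unit) (_:Unit) => s / μ))⁻¹
        (Sum.inr ()) (Sum.inr ()) = μ * N⁻¹ (Sum.inr ()) (Sum.inr ()) := by
    intro μ hμ
    rw [hinv μ hμ, Matrix.mul_diagonal, Matrix.diagonal_mul]
    simp [mul_comm]
  constructor
  · intro j a ha b hb hab
    simp only [← hBH, ← hB]
    rw [key1 j a ha, key1 j b hb]
    have hainv : b⁻¹ ≤ a⁻¹ := by
      apply inv_anti₀ ha hab
    exact mul_le_mul_of_nonneg_left hainv (hdiag _)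
  · intro a ha b hb hab
    simp only [← hBH, ← hB]
    rw [key2 a ha, key2 b hb]
    exact mul_le_mul_of_nonneg_right hab (hdiag _)
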